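/- Let E be a real inner product space, let G and B be orthonormal vectors in E, let θ be a real number, and set ψ = sin(θ)·G + cos(θ)·B. Define the linear map S on the span of {G, B} that negates G and fixes B (S x = x − 2⟨x, G⟩·G), and define R as the reflection about ψ (R x = 2⟨x, ψ⟩·ψ − x). Let Q = R ∘ S. Then for every natural number m, Qᵐ ψ = sin((2m+1)·θ)·G + cos((2m+1)·θ)·B. -/

import Mathlib

open RealInnerProductSpace

theorem grover_rotation {E : Type*} [NormedAddCommGroup E] [InnerProductSpace ℝ E]
    (G B : E) (hG : ‖G‖ = 1) (hB : ‖B‖ = 1) (hGB : ⟪G, B⟫ = 0)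
    (θ : ℝ) (ψ : E) (hψ : ψ = Real.sin θ • G + Real.cos θ • B)
    (S R : E → E)
    (hS : ∀ x, S x = x - (2 * ⟪x, G⟫) • G)
    (hR : ∀ x, R x = (2 * ⟪x, ψ⟫) • ψ - x) :
    ∀ m : ℕ, (R ∘ S)^[m] ψ =
      Real.sin ((2 * m + 1) * θ) • G + Real.cos ((2 * m + 1) * θ) • B := by
  have hGG : ⟪G, G⟫ = 1 := by
    rw [real_inner_self_eq_norm_sq, hG]; norm_num
  have hBB : ⟪B, B⟫ = 1 := by
    rw [real_inner_self_eq_norm_sq, hB]; norm_num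
  have hBG : ⟪B, G⟫ = 0 := by rw [real_inner_comm]; exact hGB
  have step : ∀ α : ℝ, (R ∘ S) (Real.sin α • G + Real.cos α • B) =
      Real.sin (α + 2*θ) • G + Real.cos (α + 2*θ) • B := by
    intro α
    have h1 : ⟪Real.sin α • G + Real.cos α • B, G⟫ = Real.sin α := by
      simp [inner_add_left, real_inner_smul_left, hGG, hBG, hG]
    have hSv : S (Real.sin α • G + Real.cos α • B) =
        (- Real.sin α) • G + Real.cos α • B := by
      rw [hS, h1]
      module
    have h2 : ⟪(- Real.sin α) • G + Real.cos α • B, ψ⟫ = Real.cos (α + θ) := by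
      rw [hψ]
      simp only [inner_add_left, inner_add_right, real_inner_smul_left,
        real_inner_smul_right, hGG, hBB, hGB, hBG]
      rw [Real.cos_add]; ring
    have hs : Real.sin (α + 2*θ) = 2 * Real.cos (α + θ) * Real.sin θ + Real.sin α := by
      rw [show α + 2*θ = α + 2*θ from rfl, Real.sin_add, Real.cos_add,
        Real.sin_two_mul, Real.cos_two_mul']
      linear_combination Real.sin α * Real.sin_sq_add_cos_sq θ
    have hc : Real.cos (α + 2*θ) = 2 * Real.cos (α + θ) * Real.cos θ - Real.cos α := by
      rw [Real.cos_add, Real.cos_add, Real.sin_two_mul, Real.cos_two_mul]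
      nlinarith [Real.sin_sq_add_cos_sq θ]
    simp only [Function.comp_apply]
    rw [hSv, hR, h2, hs, hc, hψ]
    module
  intro m
  induction m with
  | zero => simpa using hψ
  | succ n ih =>
    rw [Function.iterate_succ_apply', ih, step]
    congr 2 <;> push_cast <;> ring
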